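/- For N ≥ 3, define β_N = (sin(π/N) − (π/N)·cos(π/N)) / (sin(π/N)·cos(π/N) − (π/N)·cos(2π/N)). Then the sequence (β_N) is strictly decreasing in N and converges to 1/4 as N → ∞. -/

import Mathlib

open Real Set Filter

noncomputable def betaSeq (N : ℕ) : ℝ :=
  (Real.sin (Real.pi / N) - (Real.pi / N) * Real.cos (Real.pi / N)) /
    (Real.sin (Real.pi / N) * Real.cos (Real.pi / N) - (Real.pi / N) * Real.cos (2 * Real.pi / N))

noncomputable def ggF (x : ℝ) : ℝ := Real.sin x - x * Real.cos x
noncomputable def hhF (x : ℝ) : ℝ := Real.sin x * Real.cos x - x * Real.cos (2 * x)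
noncomputable def FF (x : ℝ) : ℝ := ggF x / hhF x

lemma gg_hasDeriv (x : ℝ) : HasDerivAt ggF (x * Real.sin x) x := by
  have h : HasDerivAt ggF (Real.cos x - (1 * Real.cos x + x * (-Real.sin x))) x :=
    (Real.hasDerivAt_sin x).sub ((hasDerivAt_id x).mul (Real.hasDerivAt_cos x))
  convert h using 1; ring

lemma hh_hasDeriv (x : ℝ) : HasDerivAt hhF (2 * x * Real.sin (2 * x)) x := by
  have h2y : HasDerivAt (fun y : ℝ => 2 * y) 2 x := by
    simpa using (hasDerivAt_id x).const_mul 2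
  have hc : HasDerivAt (fun y : ℝ => Real.cos (2 * y)) (-Real.sin (2 * x) * 2) x := by
    have := (Real.hasDerivAt_cos (2 * x)).comp x h2y
    exact this
  have h : HasDerivAt hhF
      ((Real.cos x * Real.cos x + Real.sin x * (-Real.sin x)) -
        (1 * Real.cos (2 * x) + x * (-Real.sin (2 * x) * 2))) x :=
    ((Real.hasDerivAt_sin x).mul (Real.hasDerivAt_cos x)).sub ((hasDerivAt_id x).mul hc)
  convert h using 1
  have h2 : Real.cos (2 * x) = Real.cos x ^ 2 - Real.sin x ^ 2 := Real.cos_two_mul' x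
  nlinarith [h2]

lemma gg_pos {x : ℝ} (hx : 0 < x) (hx2 : x < Real.pi) : 0 < ggF x := by
  have mono : StrictMonoOn ggF (Icc 0 Real.pi) := by
    apply strictMonoOn_of_deriv_pos (convex_Icc 0 Real.pi)
    · exact (Real.continuous_sin.sub (continuous_id.mul Real.continuous_cos)).continuousOn
    · intro y hy
      rw [interior_Icc] at hy
      rw [(gg_hasDeriv y).deriv]
      exact mul_pos hy.1 (Real.sin_pos_of_pos_of_lt_pi hy.1 hy.2)
  have h0 : ggF 0 = 0 := by simp [ggF]
  have := mono ⟨le_refl 0, Real.pi_pos.le⟩ ⟨hx.le, hx2.le⟩ hx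
  rwa [h0] at this

noncomputable def psiF (u : ℝ) : ℝ := u * Real.cos u + 2 * u - 3 * Real.sin u

lemma psi_hasDeriv (u : ℝ) : HasDerivAt psiF (2 - 2 * Real.cos u - u * Real.sin u) u := by
  have h : HasDerivAt psiF
      ((1 * Real.cos u + u * (-Real.sin u)) + 2 * 1 - 3 * Real.cos u) u := by
    exact (((hasDerivAt_id u).mul (Real.hasDerivAt_cos u)).add
      ((hasDerivAt_id u).const_mul 2)).sub ((Real.hasDerivAt_sin u).const_mul 3)
  convert h using 1; ring

lemma psi_pos {u : ℝ} (hu : 0 < u) (hu2 : u ≤ Real.pi) : 0 < psiF u := by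
  have mono : StrictMonoOn psiF (Icc 0 Real.pi) := by
    apply strictMonoOn_of_deriv_pos (convex_Icc 0 Real.pi)
    · exact ((continuous_id.mul Real.continuous_cos).add
        (continuous_const.mul continuous_id)).sub
        (continuous_const.mul Real.continuous_sin) |>.continuousOn
    · intro y hy
      rw [interior_Icc] at hy
      rw [(psi_hasDeriv y).deriv]
      -- 2 - 2 cos y - y sin y = 4 sin(y/2) * (sin(y/2) - (y/2) cos(y/2))
      have h1 : Real.sin y = 2 * Real.sin (y / 2) * Real.cos (y / 2) := by
        rw [← Real.sin_two_mul]; ring_nf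
      have h2 : Real.cos y = 2 * Real.cos (y / 2) ^ 2 - 1 := by
        rw [← Real.cos_two_mul]; ring_nf
      have h3 : Real.sin (y / 2) ^ 2 + Real.cos (y / 2) ^ 2 = 1 := Real.sin_sq_add_cos_sq _
      have key : 2 - 2 * Real.cos y - y * Real.sin y =
          4 * Real.sin (y / 2) * (Real.sin (y / 2) - (y / 2) * Real.cos (y / 2)) := by
        rw [h1, h2]; nlinarith [h3]
      rw [key]
      have hs : 0 < Real.sin (y / 2) :=
        Real.sin_pos_of_pos_of_lt_pi (by linarith [hy.1]) (by linarith [hy.2, Real.pi_pos])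
      have hg : 0 < ggF (y / 2) := gg_pos (by linarith [hy.1]) (by linarith [hy.2, Real.pi_pos])
      have : 0 < Real.sin (y / 2) - y / 2 * Real.cos (y / 2) := hg
      nlinarith
  have h0 : psiF 0 = 0 := by simp [psiF]
  have := mono ⟨le_refl 0, Real.pi_pos.le⟩ ⟨hu.le, hu2⟩ hu
  rwa [h0] at this

lemma hh_pos {x : ℝ} (hx : 0 < x) (hx2 : x ≤ Real.pi / 2) : 0 < hhF x := by
  have mono : StrictMonoOn hhF (Icc 0 (Real.pi / 2)) := by
    apply strictMonoOn_of_deriv_pos (convex_Icc 0 (Real.pi / 2))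
    · exact ((Real.continuous_sin.mul Real.continuous_cos).sub
        (continuous_id.mul (Real.continuous_cos.comp (continuous_const.mul continuous_id)))).continuousOn
    · intro y hy
      rw [interior_Icc] at hy
      rw [(hh_hasDeriv y).deriv]
      have : 0 < Real.sin (2 * y) :=
        Real.sin_pos_of_pos_of_lt_pi (by linarith [hy.1]) (by linarith [hy.2])
      have := hy.1
      positivity
  have h0 : hhF 0 = 0 := by simp [hhF]
  have := mono ⟨le_refl 0, by positivity⟩ ⟨hx.le, hx2⟩ hx
  rwa [h0] at this

lemma FF_strictMono : StrictMonoOn FF (Ioc 0 (Real.pi / 3)) := by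
  apply strictMonoOn_of_deriv_pos (convex_Ioc 0 (Real.pi / 3))
  · apply ContinuousOn.div
    · exact (Real.continuous_sin.sub (continuous_id.mul Real.continuous_cos)).continuousOn
    · exact ((Real.continuous_sin.mul Real.continuous_cos).sub
        (continuous_id.mul (Real.continuous_cos.comp (continuous_const.mul continuous_id)))).continuousOn
    · intro x hx
      exact (hh_pos hx.1 (by linarith [hx.2, Real.pi_pos])).ne'
  · intro x hx
    rw [interior_Ioc] at hx
    have hpi := Real.pi_pos
    have hxpos := hx.1
    have hx3 := hx.2
    have hhne : hhF x ≠ 0 := (hh_pos hxpos (by linarith)).ne'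
    have hd : HasDerivAt FF
        ((x * Real.sin x * hhF x - ggF x * (2 * x * Real.sin (2 * x))) / hhF x ^ 2) x :=
      (gg_hasDeriv x).div (hh_hasDeriv x) hhne
    rw [hd.deriv]
    apply div_pos _ (by positivity)
    have hsin2 : Real.sin (2 * x) = 2 * Real.sin x * Real.cos x := Real.sin_two_mul x
    have hcos2 : Real.cos (2 * x) = 2 * Real.cos x ^ 2 - 1 := Real.cos_two_mul x
    have key : x * Real.sin x * hhF x - ggF x * (2 * x * Real.sin (2 * x)) =
        x * Real.sin x * (psiF (2 * x) / 2) := by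
      simp only [ggF, hhF, psiF, hsin2, hcos2]
      ring
    rw [key]
    have hs : 0 < Real.sin x := Real.sin_pos_of_pos_of_lt_pi hxpos (by linarith)
    have hpsi : 0 < psiF (2 * x) := psi_pos (by linarith) (by linarith)
    positivity

lemma betaSeq_eq (N : ℕ) : betaSeq N = FF (Real.pi / N) := by
  unfold betaSeq FF ggF hhF
  rw [mul_div_assoc]

lemma FF_tendsto : Tendsto FF (nhdsWithin 0 (Ioi 0)) (nhds (1 / 4)) := by
  have hpi := Real.pi_pos
  apply HasDerivAt.lhopital_zero_right_on_Ioo (a := 0) (b := Real.pi / 2)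
    (f' := fun x => x * Real.sin x) (g' := fun x => 2 * x * Real.sin (2 * x)) (by linarith)
  · intro x _; exact gg_hasDeriv x
  · intro x _; exact hh_hasDeriv x
  · intro x hx
    have : 0 < Real.sin (2 * x) :=
      Real.sin_pos_of_pos_of_lt_pi (by linarith [hx.1]) (by linarith [hx.2])
    have := hx.1
    positivity
  · have : Tendsto ggF (nhds 0) (nhds (ggF 0)) :=
      (Real.continuous_sin.sub (continuous_id.mul Real.continuous_cos)).tendsto 0
    simp only [ggF, Real.sin_zero, Real.cos_zero, zero_mul, sub_zero, mul_one] at this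
    exact this.mono_left nhdsWithin_le_nhds
  · have : Tendsto hhF (nhds 0) (nhds (hhF 0)) :=
      ((Real.continuous_sin.mul Real.continuous_cos).sub
        (continuous_id.mul (Real.continuous_cos.comp (continuous_const.mul continuous_id)))).tendsto 0
    simp only [hhF, Real.sin_zero, Real.cos_zero, zero_mul, mul_zero, sub_zero, mul_one] at this
    exact this.mono_left nhdsWithin_le_nhds
  · have hev : ∀ᶠ x in nhdsWithin (0:ℝ) (Ioi 0),
        (fun y => 1 / (4 * Real.cos y)) x =
        (fun y => y * Real.sin y / (2 * y * Real.sin (2 * y))) x := by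
      filter_upwards [Ioo_mem_nhdsGT_of_mem (by constructor <;> linarith : (0:ℝ) ∈ Ico 0 (Real.pi / 2))]
        with x hx
      have hxpos : 0 < x := hx.1
      have hs : 0 < Real.sin x := Real.sin_pos_of_pos_of_lt_pi hxpos (by linarith [hx.2])
      have hc : 0 < Real.cos x := Real.cos_pos_of_mem_Ioo ⟨by linarith, hx.2⟩
      rw [Real.sin_two_mul]
      field_simp
      ring
    have hlim : Tendsto (fun y => 1 / (4 * Real.cos y)) (nhdsWithin (0:ℝ) (Ioi 0)) (nhds (1 / 4)) := by
      have : Tendsto (fun y => 1 / (4 * Real.cos y)) (nhds (0:ℝ)) (nhds (1 / (4 * Real.cos 0))) := by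
        apply Tendsto.div tendsto_const_nhds
          ((continuous_const.mul Real.continuous_cos).tendsto 0)
        simp
      simpa using this.mono_left nhdsWithin_le_nhds
    exact hlim.congr' hev

theorem betaSeq_strictAnti_and_tendsto :
    StrictAntiOn betaSeq {N : ℕ | 3 ≤ N} ∧
      Filter.Tendsto betaSeq Filter.atTop (nhds (1 / 4)) := by
  have hpi := Real.pi_pos
  constructor
  · intro N hN M hM hNM
    simp only [Set.mem_setOf_eq] at hN hM
    rw [betaSeq_eq, betaSeq_eq]
    have hN0 : (0:ℝ) < N := by exact_mod_cast Nat.lt_of_lt_of_le (by norm_num) hN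
    have hM0 : (0:ℝ) < M := by exact_mod_cast Nat.lt_of_lt_of_le (by norm_num) hM
    have hN3 : (3:ℝ) ≤ N := by exact_mod_cast hN
    have hM3 : (3:ℝ) ≤ M := by exact_mod_cast hM
    have hNM' : (N:ℝ) < M := by exact_mod_cast hNM
    apply FF_strictMono
    · exact ⟨by positivity, div_le_div_of_nonneg_left hpi.le (by norm_num) hM3⟩
    · exact ⟨by positivity, div_le_div_of_nonneg_left hpi.le (by norm_num) hN3⟩
    · exact div_lt_div_of_pos_left hpi hN0 hNM'
  · have h1 : Tendsto (fun N : ℕ => Real.pi / N) atTop (nhdsWithin 0 (Ioi 0)) := by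
      apply tendsto_nhdsWithin_of_tendsto_nhds_of_eventually_within
      · exact tendsto_const_div_atTop_nhds_zero_nat Real.pi
      · filter_upwards [eventually_ge_atTop 1] with N hN
        have : (0:ℝ) < N := by exact_mod_cast hN
        exact div_pos hpi this
    have := FF_tendsto.comp h1
    convert this using 1
    funext N
    exact betaSeq_eq N
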